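/- arXiv:1108.5104 — 2 statements merged into one kernel-verified Lean document; each statement's English description precedes it below -/
import Mathlib

section
/- (2-row k-column formulas) Let C be a nonempty (n,d,w) constant-weight code of size M, with d even and d < 2w ≤ n, and with distance distribution {A_{2i}}_{i=d/2}^{w}. For each k = 1, 2, …, M, write M · P_k^−(n;w) = q_k · C(n,k) + r_k with 0 ≤ r_k < C(n,k). Then: (1) Σ_{i=d/2}^{w} P_k^−(n; 2i) · A_{2i} ≤ (2/M)·[ (C(n,k) − r_k)·q_k·(M − q_k) + r_k·(q_k + 1)·(M − q_k − 1) ]; and (2) −Σ_{i=d/2}^{w} P_k^+(n; 2i) · A_{2i} ≤ (2/M)·[ (C(n,k) − r_k)·q_k·(M − q_k) + r_k·(q_k + 1)·(M − q_k − 1) ] − (M−1)·C(n,k). -/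
/-- The number of ones of a binary vector. -/
def wtOnes {n : ℕ} (u : Fin n → ZMod 2) : ℕ :=
  (Finset.univ.filter (fun t => u t = 1)).card

/-- `C` is an `(n,d,w)` constant-weight binary code. -/
def IsCWCode (n d w : ℕ) (C : Finset (Fin n → ZMod 2)) : Prop :=
  (∀ c ∈ C, wtOnes c = w) ∧
  ∀ u ∈ C, ∀ v ∈ C, u ≠ v → d ≤ hammingDist u v

/-- `A n d w`: the largest possible size of an `(n,d,w)` constant-weight code. -/
noncomputable def A (n d w : ℕ) : ℕ :=
  sSup {M | ∃ C : Finset (Fin n → ZMod 2), IsCWCode n d w C ∧ C.card = M}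

/-- `C` is a `(w1,n1,w2,n2,d)` doubly-constant-weight binary code. -/
def IsDCWCode (w1 n1 w2 n2 d : ℕ) (C : Finset (Fin n1 ⊕ Fin n2 → ZMod 2)) : Prop :=
  (∀ c ∈ C,
    (Finset.univ.filter (fun t : Fin n1 => c (Sum.inl t) = 1)).card = w1 ∧
    (Finset.univ.filter (fun t : Fin n2 => c (Sum.inr t) = 1)).card = w2) ∧
  ∀ u ∈ C, ∀ v ∈ C, u ≠ v → d ≤ hammingDist u v

/-- `T w1 n1 w2 n2 d`: the largest possible size of a `(w1,n1,w2,n2,d)`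
doubly-constant-weight code. -/
noncomputable def T (w1 n1 w2 n2 d : ℕ) : ℕ :=
  sSup {M | ∃ C : Finset (Fin n1 ⊕ Fin n2 → ZMod 2), IsDCWCode w1 n1 w2 n2 d C ∧ C.card = M}

/-- `S_i(c)`: the set of codewords of `C` at distance `i` from `c`. -/
def Sdist {n : ℕ} (C : Finset (Fin n → ZMod 2)) (c : Fin n → ZMod 2) (i : ℕ) :
    Finset (Fin n → ZMod 2) :=
  C.filter (fun u => hammingDist u c = i)

/-- The distance distribution `A_i = (1/|C|) ∑_{c ∈ C} |S_i(c)|` of a code `C`. -/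
noncomputable def distDistr {n : ℕ} (C : Finset (Fin n → ZMod 2)) (i : ℕ) : ℚ :=
  (∑ c ∈ C, ((Sdist C c i).card : ℚ)) / (C.card : ℚ)

/-- `V_i`: vectors of `F^n` with exactly `i` ones on the first `w` coordinates and
exactly `i` ones on the last `n - w` coordinates. -/
def Vset (n w i : ℕ) : Finset (Fin n → ZMod 2) :=
  Finset.univ.filter (fun u =>
    (Finset.univ.filter (fun t : Fin n => t.val < w ∧ u t = 1)).card = i ∧
    (Finset.univ.filter (fun t : Fin n => w ≤ t.val ∧ u t = 1)).card = i)

/-- `m_{i,j} = max { d(u,v) : u ∈ V_i, v ∈ V_j }`. -/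
def mMax (n w i j : ℕ) : ℕ :=
  ((Vset n w i) ×ˢ (Vset n w j)).sup fun p => hammingDist p.1 p.2

/-- `P⁻_k(n;x) = ∑_{j odd} C(x,j) C(n-x,k-j)`. -/
def Pminus (k n x : ℕ) : ℕ :=
  ∑ j ∈ Finset.range (k + 1), if Odd j then x.choose j * (n - x).choose (k - j) else 0

/-- `P⁺_k(n;x) = ∑_{j even} C(x,j) C(n-x,k-j)`. -/
def Pplus (k n x : ℕ) : ℕ :=
  ∑ j ∈ Finset.range (k + 1), if Even j then x.choose j * (n - x).choose (k - j) else 0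

/-- The Krawtchouk polynomial `P_k(n;x) = ∑_j (-1)^j C(x,j) C(n-x,k-j)` at integer points. -/
def Kraw (k n x : ℕ) : ℤ :=
  ∑ j ∈ Finset.range (k + 1), (-1 : ℤ) ^ j * x.choose j * (n - x).choose (k - j)

lemma card_fiber {n : ℕ} (k j : ℕ) (hj : j ≤ k) (S : Finset (Fin n)) :
    ((Finset.univ.powersetCard k).filter (fun K => (K ∩ S).card = j)).card
      = S.card.choose j * (n - S.card).choose (k - j) := by
  have key : ((Finset.univ.powersetCard k).filter (fun K => (K ∩ S).card = j)).card
      = (S.powersetCard j ×ˢ Sᶜ.powersetCard (k - j)).card := by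
    apply Finset.card_nbij' (fun K => (K ∩ S, K \ S)) (fun p => p.1 ∪ p.2)
    · intro K hK
      simp only [Finset.mem_coe, Finset.mem_filter, Finset.mem_powersetCard] at hK
      obtain ⟨⟨-, hKc⟩, hKS⟩ := hK
      have hcd := Finset.card_inter_add_card_sdiff K S
      simp only [Finset.mem_coe, Finset.mem_product, Finset.mem_powersetCard]
      refine ⟨⟨Finset.inter_subset_right, hKS⟩, ?_, by omega⟩
      intro x hx
      simp only [Finset.mem_sdiff] at hx
      simpa using hx.2
    · intro p hp
      simp only [Finset.mem_coe, Finset.mem_product, Finset.mem_powersetCard] at hp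
      obtain ⟨⟨h1s, h1c⟩, h2s, h2c⟩ := hp
      have hdisj : Disjoint p.1 p.2 := by
        refine Finset.disjoint_left.2 fun x hx1 hx2 => ?_
        have := h2s hx2
        simp only [Finset.mem_compl] at this
        exact this (h1s hx1)
      simp only [Finset.mem_coe, Finset.mem_filter, Finset.mem_powersetCard]
      have hinter : (p.1 ∪ p.2) ∩ S = p.1 := by
        rw [Finset.union_inter_distrib_right, Finset.inter_eq_left.2 h1s]
        have : p.2 ∩ S = ∅ := by
          refine Finset.eq_empty_of_forall_notMem fun x hx => ?_
          simp only [Finset.mem_inter] at hx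
          have := h2s hx.1
          simp only [Finset.mem_compl] at this
          exact this hx.2
        rw [this, Finset.union_empty]
      refine ⟨⟨Finset.subset_univ _, ?_⟩, by rw [hinter, h1c]⟩
      rw [Finset.card_union_of_disjoint hdisj, h1c, h2c]
      omega
    · intro K hK
      simp only [Finset.mem_coe, Finset.mem_filter] at hK
      dsimp only; rw [Finset.union_comm]; exact Finset.sdiff_union_inter K S
    · intro p hp
      simp only [Finset.mem_coe, Finset.mem_product, Finset.mem_powersetCard] at hp
      obtain ⟨⟨h1s, h1c⟩, h2s, h2c⟩ := hp
      have hinter : (p.1 ∪ p.2) ∩ S = p.1 := by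
        rw [Finset.union_inter_distrib_right, Finset.inter_eq_left.2 h1s]
        have : p.2 ∩ S = ∅ := by
          refine Finset.eq_empty_of_forall_notMem fun x hx => ?_
          simp only [Finset.mem_inter] at hx
          have := h2s hx.1
          simp only [Finset.mem_compl] at this
          exact this hx.2
        rw [this, Finset.union_empty]
      have hsd : (p.1 ∪ p.2) \ S = p.2 := by
        rw [Finset.union_sdiff_distrib]
        have e1 : p.1 \ S = ∅ := by
          rw [Finset.sdiff_eq_empty_iff_subset]; exact h1s
        have e2 : p.2 \ S = p.2 := by
          rw [Finset.sdiff_eq_self_iff_disjoint]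
          refine Finset.disjoint_left.2 fun x hx2 hxS => ?_
          have := h2s hx2
          simp only [Finset.mem_compl] at this
          exact this hxS
        rw [e1, e2, Finset.empty_union]
      exact Prod.ext hinter hsd
  rw [key, Finset.card_product, Finset.card_powersetCard, Finset.card_powersetCard,
    Finset.card_compl, Fintype.card_fin]

lemma card_parity_inter {n : ℕ} (k : ℕ) (S : Finset (Fin n)) (p : ℕ → Prop) [DecidablePred p] :
    ((Finset.univ.powersetCard k).filter (fun K => p (K ∩ S).card)).card
      = ∑ j ∈ Finset.range (k + 1),
          if p j then S.card.choose j * (n - S.card).choose (k - j) else 0 := by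
  rw [Finset.card_eq_sum_card_fiberwise
    (f := fun K => (K ∩ S).card) (t := Finset.range (k + 1)) ?mem]
  case mem =>
    intro K hK
    simp only [Finset.mem_coe, Finset.mem_filter, Finset.mem_powersetCard] at hK
    rw [Finset.mem_coe, Finset.mem_range, Nat.lt_succ_iff, ← hK.1.2]
    exact Finset.card_le_card Finset.inter_subset_left
  refine Finset.sum_congr rfl fun j hj => ?_
  rw [Finset.mem_range, Nat.lt_succ_iff] at hj
  by_cases hp : p j
  · rw [if_pos hp, ← card_fiber k j hj S]
    congr 1
    ext K
    simp only [Finset.mem_filter]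
    constructor
    · rintro ⟨⟨h1, -⟩, h2⟩; exact ⟨h1, h2⟩
    · rintro ⟨h1, h2⟩; exact ⟨⟨h1, h2 ▸ hp⟩, h2⟩
  · rw [if_neg hp, Finset.card_eq_zero]
    refine Finset.filter_eq_empty_iff.2 fun K hK => ?_
    simp only [Finset.mem_filter] at hK
    intro h
    exact hp (h ▸ hK.2)

lemma card_odd_inter {n : ℕ} (k : ℕ) (S : Finset (Fin n)) :
    ((Finset.univ.powersetCard k).filter (fun K => Odd (K ∩ S).card)).card
      = Pminus k n S.card :=
  card_parity_inter k S Odd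

lemma inter_univ_filter {n : ℕ} (K : Finset (Fin n)) (p : Fin n → Prop) [DecidablePred p] :
    K ∩ Finset.univ.filter p = K.filter p := by
  ext x; simp [Finset.mem_filter, Finset.mem_inter]

lemma zmod2_ne_one : ∀ a : ZMod 2, a ≠ 1 → a = 0 := by decide

lemma card_filter_one_zmod {n : ℕ} (K : Finset (Fin n)) (u : Fin n → ZMod 2) :
    (((K.filter fun t => u t = 1).card : ZMod 2)) = ∑ t ∈ K, u t := by
  rw [Finset.card_filter]
  push_cast
  refine Finset.sum_congr rfl fun t _ => ?_
  by_cases h : u t = 1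
  · simp [h]
  · simp [h, zmod2_ne_one _ h]

lemma card_filter_ne_zmod {n : ℕ} (K : Finset (Fin n)) (u v : Fin n → ZMod 2) :
    (((K.filter fun t => u t ≠ v t).card : ZMod 2)) = ∑ t ∈ K, (u t + v t) := by
  rw [Finset.card_filter]
  push_cast
  refine Finset.sum_congr rfl fun t _ => ?_
  have key : ∀ a b : ZMod 2, (if a ≠ b then (1 : ZMod 2) else 0) = a + b := by decide
  simpa using key (u t) (v t)

lemma odd_iff_zmod (m : ℕ) : Odd m ↔ (m : ZMod 2) = 1 := by
  rw [Nat.odd_iff, show ((m : ZMod 2)) = ((m % 2 : ℕ) : ZMod 2) from (ZMod.natCast_mod m 2).symm]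
  rcases Nat.mod_two_eq_zero_or_one m with h | h <;> rw [h] <;> simp

lemma hammingDist_eq_card {n : ℕ} (u v : Fin n → ZMod 2) :
    hammingDist u v = (Finset.univ.filter fun t => u t ≠ v t).card := rfl

lemma sumA {n : ℕ} (k w : ℕ) (C : Finset (Fin n → ZMod 2))
    (hw : ∀ c ∈ C, (Finset.univ.filter fun t => c t = 1).card = w) :
    ∑ K ∈ Finset.univ.powersetCard k,
        (C.filter fun c => Odd ((K.filter fun t => c t = 1).card)).card
      = C.card * Pminus k n w := by
  have step : ∀ K ∈ Finset.univ.powersetCard k,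
      (C.filter fun c => Odd ((K.filter fun t => c t = 1).card)).card
        = ∑ c ∈ C, if Odd ((K.filter fun t => c t = 1).card) then 1 else 0 :=
    fun K _ => Finset.card_filter _ _
  rw [Finset.sum_congr rfl step, Finset.sum_comm]
  have percode : ∀ c ∈ C,
      (∑ K ∈ Finset.univ.powersetCard k,
        if Odd ((K.filter fun t => c t = 1).card) then 1 else 0) = Pminus k n w := by
    intro c hc
    rw [← Finset.card_filter]
    have hset : (Finset.univ.powersetCard k).filter
          (fun K => Odd ((K.filter fun t => c t = 1).card))
        = (Finset.univ.powersetCard k).filter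
          (fun K => Odd ((K ∩ (Finset.univ.filter fun t => c t = 1)).card)) :=
      Finset.filter_congr (fun K _ => by rw [inter_univ_filter])
    rw [hset, card_odd_inter, hw c hc]
  rw [Finset.sum_congr rfl percode, Finset.sum_const, smul_eq_mul]

lemma parity_pair {n : ℕ} (K : Finset (Fin n)) (u v : Fin n → ZMod 2) :
    Odd ((K.filter fun t => u t ≠ v t).card)
      ↔ (Odd ((K.filter fun t => u t = 1).card) ↔ ¬ Odd ((K.filter fun t => v t = 1).card)) := by
  rw [odd_iff_zmod, odd_iff_zmod, odd_iff_zmod, card_filter_ne_zmod,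
    card_filter_one_zmod, card_filter_one_zmod, Finset.sum_add_distrib]
  generalize (∑ t ∈ K, u t) = a
  generalize (∑ t ∈ K, v t) = b
  revert a b; decide

lemma pair_count {α : Type*} [DecidableEq α] (C : Finset α) (f : α → Prop) [DecidablePred f] :
    (∑ c ∈ C, ∑ c' ∈ C, if (f c' ↔ ¬ f c) then 1 else 0)
      = 2 * ((C.filter f).card * (C.card - (C.filter f).card)) := by
  set m := (C.filter f).card with hm
  have hmle : m ≤ C.card := Finset.card_filter_le _ _
  have hnot : (C.filter fun c => ¬ f c).card = C.card - m := by
    have := Finset.card_filter_add_card_filter_not (s := C) (p := f)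
    omega
  have hg : ∀ c ∈ C, (∑ c' ∈ C, if (f c' ↔ ¬ f c) then 1 else 0)
      = if f c then C.card - m else m := by
    intro c _
    by_cases hfc : f c
    · rw [if_pos hfc, ← hnot, ← Finset.card_filter]
      congr 1
      exact Finset.filter_congr (fun c' _ => by constructor <;> intro h <;> tauto)
    · rw [if_neg hfc, hm, ← Finset.card_filter]
      congr 1
      exact Finset.filter_congr (fun c' _ => by constructor <;> intro h <;> tauto)
  rw [Finset.sum_congr rfl hg, Finset.sum_ite, Finset.sum_const, Finset.sum_const,
    smul_eq_mul, smul_eq_mul, hnot]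
  have h1 : (C.filter fun c => f c).card = m := hm.symm
  rw [h1]
  ring

lemma sumB {n : ℕ} (k : ℕ) (C : Finset (Fin n → ZMod 2)) :
    ∑ c ∈ C, ∑ c' ∈ C, Pminus k n (hammingDist c' c)
      = ∑ K ∈ Finset.univ.powersetCard k,
          2 * ((C.filter fun c => Odd ((K.filter fun t => c t = 1).card)).card
            * (C.card - (C.filter fun c => Odd ((K.filter fun t => c t = 1).card)).card)) := by
  have step1 : ∀ c ∈ C, ∀ c' ∈ C, Pminus k n (hammingDist c' c)
      = ∑ K ∈ Finset.univ.powersetCard k,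
          if Odd ((K.filter fun t => c' t ≠ c t).card) then 1 else 0 := by
    intro c _ c' _
    rw [← Finset.card_filter]
    have hset : (Finset.univ.powersetCard k).filter
          (fun K => Odd ((K.filter fun t => c' t ≠ c t).card))
        = (Finset.univ.powersetCard k).filter
          (fun K => Odd ((K ∩ (Finset.univ.filter fun t => c' t ≠ c t)).card)) :=
      Finset.filter_congr (fun K _ => by rw [inter_univ_filter])
    rw [hset, card_odd_inter, hammingDist_eq_card]
  calc ∑ c ∈ C, ∑ c' ∈ C, Pminus k n (hammingDist c' c)
      = ∑ c ∈ C, ∑ c' ∈ C, ∑ K ∈ Finset.univ.powersetCard k,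
          (if Odd ((K.filter fun t => c' t ≠ c t).card) then 1 else 0) := by
        refine Finset.sum_congr rfl fun c hc => Finset.sum_congr rfl fun c' hc' => ?_
        exact step1 c hc c' hc'
    _ = ∑ K ∈ Finset.univ.powersetCard k, ∑ c ∈ C, ∑ c' ∈ C,
          (if Odd ((K.filter fun t => c' t ≠ c t).card) then 1 else 0) := by
        exact Eq.trans (Finset.sum_congr rfl fun c _ => Finset.sum_comm) Finset.sum_comm
    _ = ∑ K ∈ Finset.univ.powersetCard k,
          2 * ((C.filter fun c => Odd ((K.filter fun t => c t = 1).card)).card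
            * (C.card - (C.filter fun c => Odd ((K.filter fun t => c t = 1).card)).card)) := by
        refine Finset.sum_congr rfl fun K _ => ?_
        rw [← pair_count C (fun c => Odd ((K.filter fun t => c t = 1).card))]
        refine Finset.sum_congr rfl fun c _ => Finset.sum_congr rfl fun c' _ => ?_
        exact if_congr (parity_pair K c' c) rfl rfl

-- NEW material
lemma Pminus_zero (k n : ℕ) : Pminus k n 0 = 0 := by
  unfold Pminus
  refine Finset.sum_eq_zero fun j _ => ?_
  split_ifs with h
  · obtain ⟨t, ht⟩ := h
    rw [Nat.choose_eq_zero_of_lt (by omega), zero_mul]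
  · rfl

lemma Pplus_add_Pminus (k n x : ℕ) (hx : x ≤ n) :
    Pplus k n x + Pminus k n x = n.choose k := by
  unfold Pplus Pminus
  rw [← Finset.sum_add_distrib]
  have step : ∀ j ∈ Finset.range (k + 1),
      ((if Even j then x.choose j * (n - x).choose (k - j) else 0)
        + (if Odd j then x.choose j * (n - x).choose (k - j) else 0))
      = x.choose j * (n - x).choose (k - j) := by
    intro j _
    rcases Nat.even_or_odd j with h | h
    · rw [if_pos h, if_neg (Nat.not_odd_iff_even.mpr h), add_zero]
    · rw [if_neg (Nat.not_even_iff_odd.mpr h), if_pos h, zero_add]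
  rw [Finset.sum_congr rfl step]
  calc ∑ j ∈ Finset.range (k + 1), x.choose j * (n - x).choose (k - j)
      = ∑ ij ∈ Finset.HasAntidiagonal.antidiagonal k, x.choose ij.1 * (n - x).choose ij.2 := by
        exact (Finset.Nat.sum_antidiagonal_eq_sum_range_succ_mk
          (fun ij => x.choose ij.1 * (n - x).choose ij.2) k).symm
    _ = (x + (n - x)).choose k := (Nat.add_choose_eq x (n - x) k).symm
    _ = n.choose k := by congr 1; omega

lemma even_hammingDist {n w : ℕ} {u v : Fin n → ZMod 2}
    (hu : (Finset.univ.filter fun t => u t = 1).card = w)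
    (hv : (Finset.univ.filter fun t => v t = 1).card = w) :
    Even (hammingDist u v) := by
  rw [← Nat.not_odd_iff_even, odd_iff_zmod, hammingDist_eq_card, card_filter_ne_zmod,
    Finset.sum_add_distrib, ← card_filter_one_zmod, ← card_filter_one_zmod, hu, hv]
  intro hcon
  have : ((w : ZMod 2) + w) = 2 * w := by ring
  rw [this, show (2 : ZMod 2) = 0 by decide, zero_mul] at hcon
  exact zero_ne_one hcon

lemma hammingDist_le_two_w {n w : ℕ} {u v : Fin n → ZMod 2}
    (hu : (Finset.univ.filter fun t => u t = 1).card = w)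
    (hv : (Finset.univ.filter fun t => v t = 1).card = w) :
    hammingDist u v ≤ 2 * w := by
  rw [hammingDist_eq_card]
  have hsub : Finset.univ.filter (fun t => u t ≠ v t)
      ⊆ (Finset.univ.filter fun t => u t = 1) ∪ (Finset.univ.filter fun t => v t = 1) := by
    intro t ht
    simp only [Finset.mem_filter, Finset.mem_union, Finset.mem_univ, true_and] at ht ⊢
    by_contra hcon
    push_neg at hcon
    exact ht (by rw [zmod2_ne_one _ hcon.1, zmod2_ne_one _ hcon.2])
  calc (Finset.univ.filter (fun t => u t ≠ v t)).card
      ≤ _ := Finset.card_le_card hsub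
    _ ≤ _ := Finset.card_union_le _ _
    _ = 2 * w := by rw [hu, hv]; ring

lemma sumC {n d w : ℕ} (k : ℕ) (C : Finset (Fin n → ZMod 2)) (hd : Even d)
    (hw : ∀ c ∈ C, (Finset.univ.filter fun t => c t = 1).card = w)
    (hdist : ∀ u ∈ C, ∀ v ∈ C, u ≠ v → d ≤ hammingDist u v)
    (c : Fin n → ZMod 2) (hc : c ∈ C) :
    ∑ i ∈ Finset.Icc (d / 2) w, Pminus k n (2 * i) * (Sdist C c (2 * i)).card
      = ∑ c' ∈ C, Pminus k n (hammingDist c' c) := by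
  have step : ∀ i, Pminus k n (2 * i) * (Sdist C c (2 * i)).card
      = ∑ c' ∈ C, if hammingDist c' c = 2 * i then Pminus k n (2 * i) else 0 := by
    intro i
    rw [← Finset.sum_filter]
    unfold Sdist
    rw [Finset.sum_const, smul_eq_mul, mul_comm]
  calc ∑ i ∈ Finset.Icc (d / 2) w, Pminus k n (2 * i) * (Sdist C c (2 * i)).card
      = ∑ i ∈ Finset.Icc (d / 2) w, ∑ c' ∈ C,
          if hammingDist c' c = 2 * i then Pminus k n (2 * i) else 0 :=
        Finset.sum_congr rfl fun i _ => step i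
    _ = ∑ c' ∈ C, ∑ i ∈ Finset.Icc (d / 2) w,
          if hammingDist c' c = 2 * i then Pminus k n (2 * i) else 0 := by
        exact Finset.sum_comm (s := Finset.Icc (d / 2) w) (t := C)
          (f := fun i c' => if hammingDist c' c = 2 * i then Pminus k n (2 * i) else 0)
    _ = ∑ c' ∈ C, Pminus k n (hammingDist c' c) := by
        refine Finset.sum_congr rfl fun c' hc' => ?_
        by_cases hcc : c' = c
        · subst hcc
          rw [hammingDist_self, Pminus_zero]
          refine Finset.sum_eq_zero fun i _ => ?_
          split_ifs with h
          · rw [← h, Pminus_zero]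
          · rfl
        · have hev := even_hammingDist (hw c' hc') (hw c hc)
          have hge := hdist c' hc' c hc hcc
          have hle := hammingDist_le_two_w (hw c' hc') (hw c hc)
          obtain ⟨t, ht⟩ := hev
          obtain ⟨s, hs⟩ := hd
          have hmem : hammingDist c' c / 2 ∈ Finset.Icc (d / 2) w := by
            rw [Finset.mem_Icc]
            constructor <;> omega
          rw [Finset.sum_eq_single (hammingDist c' c / 2)]
          · rw [if_pos (by omega)]
            congr 1
            omega
          · intro i _ hne
            rw [if_neg (fun h => hne (by omega))]
          · intro h
            exact absurd hmem h

lemma sumD {n d w : ℕ} (C : Finset (Fin n → ZMod 2)) (hd : Even d)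
    (hw : ∀ c ∈ C, (Finset.univ.filter fun t => c t = 1).card = w)
    (hdist : ∀ u ∈ C, ∀ v ∈ C, u ≠ v → d ≤ hammingDist u v)
    (c : Fin n → ZMod 2) (hc : c ∈ C) :
    C.card - 1 ≤ ∑ i ∈ Finset.Icc (d / 2) w, (Sdist C c (2 * i)).card := by
  have key : (C.erase c).card = ∑ i ∈ Finset.Icc (d / 2) w,
      ((C.erase c).filter (fun c' => hammingDist c' c / 2 = i)).card := by
    refine Finset.card_eq_sum_card_fiberwise fun c' hc' => ?_
    have hc'C := Finset.mem_of_mem_erase hc'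
    have hne := Finset.ne_of_mem_erase hc'
    have hge := hdist c' hc'C c hc hne
    have hle := hammingDist_le_two_w (hw c' hc'C) (hw c hc)
    obtain ⟨t, ht⟩ := even_hammingDist (hw c' hc'C) (hw c hc)
    obtain ⟨s, hs⟩ := hd
    rw [Finset.mem_coe, Finset.mem_Icc]
    constructor <;> omega
  rw [← Finset.card_erase_of_mem hc, key]
  refine Finset.sum_le_sum fun i _ => Finset.card_le_card ?_
  intro c' hc'
  simp only [Finset.mem_filter] at hc'
  obtain ⟨hc'e, hdiv⟩ := hc'
  have hc'C := Finset.mem_of_mem_erase hc'e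
  obtain ⟨t, ht⟩ := even_hammingDist (hw c' hc'C) (hw c hc)
  unfold Sdist
  rw [Finset.mem_filter]
  exact ⟨hc'C, by omega⟩

lemma quad_bound (M q m : ℕ) :
    (m : ℚ) * ((M : ℚ) - m)
      ≤ (q : ℚ) * ((M : ℚ) - q) + ((m : ℚ) - q) * ((M : ℚ) - 2 * q - 1) := by
  have h : 0 ≤ ((m : ℚ) - q) * (((m : ℚ) - q) - 1) := by
    rcases le_or_gt m q with h | h
    · have h' : (m : ℚ) ≤ q := by exact_mod_cast h
      nlinarith [h']
    · have h' : (q : ℚ) + 1 ≤ m := by exact_mod_cast h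
      exact mul_nonneg (by linarith) (by linarith)
  nlinarith [h]

/-- 2-row k-column formulas: For a nonempty `(n,d,w)` constant-weight
code `C` of size `M` (`d` even, `d < 2w ≤ n`) with distance distribution `{A_{2i}}`,
each `k = 1,…,M`, and `M · P⁻_k(n;w) = q_k · C(n,k) + r_k` with `0 ≤ r_k < C(n,k)`,
the two inequalities hold. -/
theorem two_row_k_column (n d w : ℕ) (C : Finset (Fin n → ZMod 2)) (hC : C.Nonempty)
    (hcode : IsCWCode n d w C) (hd : Even d) (hdw : d < 2 * w) (hwn : 2 * w ≤ n)
    (k : ℕ) (hk1 : 1 ≤ k) (hk2 : k ≤ C.card)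
    (qk rk : ℕ) (hqr : C.card * Pminus k n w = qk * n.choose k + rk)
    (hrk : rk < n.choose k) :
    (∑ i ∈ Finset.Icc (d / 2) w, (Pminus k n (2 * i) : ℚ) * distDistr C (2 * i)
      ≤ (2 / (C.card : ℚ)) *
          (((n.choose k : ℚ) - (rk : ℚ)) * (qk : ℚ) * ((C.card : ℚ) - (qk : ℚ)) +
            (rk : ℚ) * ((qk : ℚ) + 1) * ((C.card : ℚ) - (qk : ℚ) - 1))) ∧
    (-(∑ i ∈ Finset.Icc (d / 2) w, (Pplus k n (2 * i) : ℚ) * distDistr C (2 * i))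
      ≤ (2 / (C.card : ℚ)) *
          (((n.choose k : ℚ) - (rk : ℚ)) * (qk : ℚ) * ((C.card : ℚ) - (qk : ℚ)) +
            (rk : ℚ) * ((qk : ℚ) + 1) * ((C.card : ℚ) - (qk : ℚ) - 1)) -
          ((C.card : ℚ) - 1) * (n.choose k : ℚ)) := by
  classical
  obtain ⟨hw', hdist⟩ := hcode
  have hw : ∀ c ∈ C, (Finset.univ.filter fun t => c t = 1).card = w := hw'
  have hM0 : 0 < C.card := Finset.card_pos.mpr hC
  have hMq : (0 : ℚ) < (C.card : ℚ) := by exact_mod_cast hM0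
  have hdd : ∀ i : ℕ, distDistr C i = (∑ c ∈ C, ((Sdist C c i).card : ℚ)) / (C.card : ℚ) :=
    fun i => rfl
  set Bq : ℚ := ((n.choose k : ℚ) - (rk : ℚ)) * (qk : ℚ) * ((C.card : ℚ) - (qk : ℚ)) +
      (rk : ℚ) * ((qk : ℚ) + 1) * ((C.card : ℚ) - (qk : ℚ) - 1) with hBq
  set mf : Finset (Fin n) → ℕ :=
    fun K => (C.filter fun c => Odd ((K.filter fun t => c t = 1).card)).card with hmfdef
  have hmle : ∀ K, mf K ≤ C.card := fun K => Finset.card_filter_le _ _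
  have hA : ∑ K ∈ Finset.univ.powersetCard k, mf K = C.card * Pminus k n w := sumA k w C hw
  have hB : ∑ c ∈ C, ∑ c' ∈ C, Pminus k n (hammingDist c' c)
      = ∑ K ∈ Finset.univ.powersetCard k, 2 * (mf K * (C.card - mf K)) := sumB k C
  have hPcard : (Finset.univ.powersetCard k : Finset (Finset (Fin n))).card = n.choose k := by
    rw [Finset.card_powersetCard, Finset.card_univ, Fintype.card_fin]
  have hsummf : ∑ K ∈ Finset.univ.powersetCard k, (mf K : ℚ)
      = (qk : ℚ) * (n.choose k : ℚ) + (rk : ℚ) := by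
    rw [← Nat.cast_sum, hA, hqr]
    push_cast
    ring
  have hkey : ∑ K ∈ Finset.univ.powersetCard k, (mf K : ℚ) * ((C.card : ℚ) - mf K) ≤ Bq := by
    have step1 : ∑ K ∈ Finset.univ.powersetCard k, (mf K : ℚ) * ((C.card : ℚ) - mf K)
        ≤ ∑ K ∈ Finset.univ.powersetCard k,
            ((qk : ℚ) * ((C.card : ℚ) - qk) + ((mf K : ℚ) - qk) * ((C.card : ℚ) - 2 * qk - 1)) :=
      Finset.sum_le_sum fun K _ => quad_bound C.card qk (mf K)
    refine le_trans step1 (le_of_eq ?_)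
    have expand : ∀ K : Finset (Fin n),
        (qk : ℚ) * ((C.card : ℚ) - qk) + ((mf K : ℚ) - qk) * ((C.card : ℚ) - 2 * qk - 1)
          = ((qk : ℚ) * ((C.card : ℚ) - qk) - (qk : ℚ) * ((C.card : ℚ) - 2 * qk - 1))
            + (mf K : ℚ) * ((C.card : ℚ) - 2 * qk - 1) := fun K => by ring
    rw [Finset.sum_congr rfl fun K _ => expand K, Finset.sum_add_distrib, Finset.sum_const,
      hPcard, ← Finset.sum_mul, hsummf, hBq, nsmul_eq_mul]
    push_cast
    ring
  have hnat1 : ∑ i ∈ Finset.Icc (d / 2) w, Pminus k n (2 * i) * (∑ c ∈ C, (Sdist C c (2 * i)).card)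
      = ∑ c ∈ C, ∑ c' ∈ C, Pminus k n (hammingDist c' c) := by
    calc ∑ i ∈ Finset.Icc (d / 2) w, Pminus k n (2 * i) * (∑ c ∈ C, (Sdist C c (2 * i)).card)
        = ∑ i ∈ Finset.Icc (d / 2) w, ∑ c ∈ C, Pminus k n (2 * i) * (Sdist C c (2 * i)).card := by
          exact Finset.sum_congr rfl fun i _ => Finset.mul_sum _ _ _
      _ = ∑ c ∈ C, ∑ i ∈ Finset.Icc (d / 2) w, Pminus k n (2 * i) * (Sdist C c (2 * i)).card := by
          exact Finset.sum_comm
      _ = ∑ c ∈ C, ∑ c' ∈ C, Pminus k n (hammingDist c' c) :=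
          Finset.sum_congr rfl fun c hc => sumC k C hd hw hdist c hc
  have hLHS1 : (∑ i ∈ Finset.Icc (d / 2) w, (Pminus k n (2 * i) : ℚ) * distDistr C (2 * i))
      = ((∑ c ∈ C, ∑ c' ∈ C, Pminus k n (hammingDist c' c) : ℕ) : ℚ) / (C.card : ℚ) := by
    rw [← hnat1]
    push_cast
    rw [Finset.sum_div]
    refine Finset.sum_congr rfl fun i _ => ?_
    rw [hdd (2 * i), mul_div_assoc]
  have hfin1 : ((∑ c ∈ C, ∑ c' ∈ C, Pminus k n (hammingDist c' c) : ℕ) : ℚ) ≤ 2 * Bq := by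
    rw [hB, Nat.cast_sum]
    have hterm : ∀ K ∈ (Finset.univ.powersetCard k : Finset (Finset (Fin n))),
        ((2 * (mf K * (C.card - mf K)) : ℕ) : ℚ) = 2 * ((mf K : ℚ) * ((C.card : ℚ) - mf K)) := by
      intro K _
      have h := hmle K
      push_cast [Nat.cast_sub h]
      ring
    rw [Finset.sum_congr rfl hterm, ← Finset.mul_sum]
    linarith [hkey]
  have part1 : ∑ i ∈ Finset.Icc (d / 2) w, (Pminus k n (2 * i) : ℚ) * distDistr C (2 * i)
      ≤ 2 / (C.card : ℚ) * Bq := by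
    rw [hLHS1, div_le_iff₀ hMq]
    have h2 : 2 / (C.card : ℚ) * Bq * (C.card : ℚ) = 2 * Bq := by field_simp
    rw [h2]
    exact hfin1
  refine ⟨part1, ?_⟩
  have hPp : ∀ i ∈ Finset.Icc (d / 2) w,
      (Pplus k n (2 * i) : ℚ) = (n.choose k : ℚ) - (Pminus k n (2 * i) : ℚ) := by
    intro i hi
    rw [Finset.mem_Icc] at hi
    have h2i : 2 * i ≤ n := by omega
    have h := Pplus_add_Pminus k n (2 * i) h2i
    have h' := congrArg (Nat.cast : ℕ → ℚ) h
    push_cast at h'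
    linarith
  have hAsum : (C.card : ℚ) - 1 ≤ ∑ i ∈ Finset.Icc (d / 2) w, distDistr C (2 * i) := by
    have hnat : C.card * (C.card - 1)
        ≤ ∑ c ∈ C, ∑ i ∈ Finset.Icc (d / 2) w, (Sdist C c (2 * i)).card := by
      calc C.card * (C.card - 1) = ∑ _c ∈ C, (C.card - 1) := by
            rw [Finset.sum_const, smul_eq_mul]
        _ ≤ _ := Finset.sum_le_sum fun c hc => sumD C hd hw hdist c hc
    have hcast : (C.card : ℚ) * ((C.card : ℚ) - 1)
        ≤ ((∑ c ∈ C, ∑ i ∈ Finset.Icc (d / 2) w, (Sdist C c (2 * i)).card : ℕ) : ℚ) := by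
      have := hnat
      have hc2 : ((C.card * (C.card - 1) : ℕ) : ℚ) = (C.card : ℚ) * ((C.card : ℚ) - 1) := by
        push_cast [Nat.cast_sub hM0]
        ring
      calc (C.card : ℚ) * ((C.card : ℚ) - 1) = ((C.card * (C.card - 1) : ℕ) : ℚ) := hc2.symm
        _ ≤ _ := by exact_mod_cast hnat
    have hdsum : ∑ i ∈ Finset.Icc (d / 2) w, distDistr C (2 * i)
        = ((∑ c ∈ C, ∑ i ∈ Finset.Icc (d / 2) w, (Sdist C c (2 * i)).card : ℕ) : ℚ)
          / (C.card : ℚ) := by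
      calc ∑ i ∈ Finset.Icc (d / 2) w, distDistr C (2 * i)
          = ∑ i ∈ Finset.Icc (d / 2) w,
              (∑ c ∈ C, ((Sdist C c (2 * i)).card : ℚ)) / (C.card : ℚ) :=
            Finset.sum_congr rfl fun i _ => hdd (2 * i)
        _ = (∑ i ∈ Finset.Icc (d / 2) w, ∑ c ∈ C, ((Sdist C c (2 * i)).card : ℚ))
              / (C.card : ℚ) := (Finset.sum_div _ _ _).symm
        _ = (∑ c ∈ C, ∑ i ∈ Finset.Icc (d / 2) w, ((Sdist C c (2 * i)).card : ℚ))
              / (C.card : ℚ) := by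
            rw [Finset.sum_comm (s := Finset.Icc (d / 2) w) (t := C)
              (f := fun i c => ((Sdist C c (2 * i)).card : ℚ))]
        _ = ((∑ c ∈ C, ∑ i ∈ Finset.Icc (d / 2) w, (Sdist C c (2 * i)).card : ℕ) : ℚ)
              / (C.card : ℚ) := by push_cast; rfl
    rw [hdsum, le_div_iff₀ hMq]
    nlinarith [hcast]
  have e1 : ∑ i ∈ Finset.Icc (d / 2) w, (Pplus k n (2 * i) : ℚ) * distDistr C (2 * i)
      = ∑ i ∈ Finset.Icc (d / 2) w,
          ((n.choose k : ℚ) - (Pminus k n (2 * i) : ℚ)) * distDistr C (2 * i) :=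
    Finset.sum_congr rfl fun i hi => by rw [hPp i hi]
  have e2 : ∑ i ∈ Finset.Icc (d / 2) w,
        ((n.choose k : ℚ) - (Pminus k n (2 * i) : ℚ)) * distDistr C (2 * i)
      = (n.choose k : ℚ) * (∑ i ∈ Finset.Icc (d / 2) w, distDistr C (2 * i))
        - ∑ i ∈ Finset.Icc (d / 2) w, (Pminus k n (2 * i) : ℚ) * distDistr C (2 * i) := by
    rw [Finset.mul_sum, ← Finset.sum_sub_distrib]
    exact Finset.sum_congr rfl fun i _ => by ring
  have h3 : (n.choose k : ℚ) * ((C.card : ℚ) - 1)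
      ≤ (n.choose k : ℚ) * ∑ i ∈ Finset.Icc (d / 2) w, distDistr C (2 * i) :=
    mul_le_mul_of_nonneg_left hAsum (by positivity)
  rw [e1, e2]
  linarith [part1, h3]
end

section
/- (Delsarte inequalities for binary codes) Let C be a nonempty subset of F^n of size M whose distinct elements are pairwise at distance at least d, and let {A_i}_{i=0}^{n} be its distance distribution. Then for every k = 0, 1, …, n, Σ_{i=1}^{n} P_k(n;i) · A_i ≥ −C(n,k). Moreover, if M is odd, then Σ_{i=1}^{n} P_k(n;i) · A_i ≥ ((1−M)/M) · C(n,k). -/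
namespace DelsarteAux

open Finset


def supp {n : ℕ} (u : Fin n → ZMod 2) : Finset (Fin n) :=
  Finset.univ.filter (fun t => u t = 1)

def chi (a : ZMod 2) : ℤ := if a = 1 then -1 else 1

lemma chi_add (a b : ZMod 2) : chi (a + b) = chi a * chi b := by
  revert a b; decide

lemma chi_cast (a : ZMod 2) : ((chi a : ℤ) : ZMod 2) = 1 := by
  revert a; decide

lemma fiber_card {n : ℕ} (E : Finset (Fin n)) (k j : ℕ) (hj : j ≤ k) :
    (((Finset.univ : Finset (Fin n)).powersetCard k).filter
        (fun S => (S ∩ E).card = j)).card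
      = E.card.choose j * (n - E.card).choose (k - j) := by
  have hcompl : (Eᶜ : Finset (Fin n)).card = n - E.card := by
    rw [Finset.card_compl, Fintype.card_fin]
  rw [← Finset.card_powersetCard j E, ← hcompl, ← Finset.card_powersetCard (k - j) Eᶜ,
    ← Finset.card_product]
  apply Finset.card_bij' (fun S _ => (S ∩ E, S \ E)) (fun p _ => p.1 ∪ p.2)
  · intro S hS
    simp only [Finset.mem_filter, Finset.mem_powersetCard] at hS
    obtain ⟨⟨hsub, hcard⟩, hint⟩ := hS
    simp only [Finset.mem_product, Finset.mem_powersetCard]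
    refine ⟨⟨Finset.inter_subset_right, hint⟩, ?_, ?_⟩
    · intro t ht
      simp only [Finset.mem_sdiff] at ht
      simp [Finset.mem_compl, ht.2]
    · have := Finset.card_inter_add_card_sdiff S E
      omega
  · intro p hp
    simp only [Finset.mem_product, Finset.mem_powersetCard] at hp
    obtain ⟨⟨h1, hc1⟩, h2, hc2⟩ := hp
    have hdisj : Disjoint p.1 p.2 := by
      apply Finset.disjoint_left.mpr
      intro t ht1 ht2
      exact (Finset.mem_compl.mp (h2 ht2)) (h1 ht1)
    have h2E : p.2 ∩ E = ∅ := by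
      apply Finset.eq_empty_of_forall_notMem
      intro t ht
      simp only [Finset.mem_inter] at ht
      exact (Finset.mem_compl.mp (h2 ht.1)) ht.2
    have hPE : (p.1 ∪ p.2) ∩ E = p.1 := by
      rw [Finset.union_inter_distrib_right, h2E, Finset.union_empty,
        Finset.inter_eq_left.mpr h1]
    simp only [Finset.mem_filter, Finset.mem_powersetCard]
    refine ⟨⟨Finset.subset_univ _, ?_⟩, by rw [hPE, hc1]⟩
    rw [Finset.card_union_of_disjoint hdisj, hc1, hc2]
    omega
  · intro S hS
    rw [Finset.union_comm]
    exact Finset.sdiff_union_inter S E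
  · intro p hp
    simp only [Finset.mem_product, Finset.mem_powersetCard] at hp
    obtain ⟨⟨h1, hc1⟩, h2, hc2⟩ := hp
    have h2E : p.2 ∩ E = ∅ := by
      apply Finset.eq_empty_of_forall_notMem
      intro t ht
      simp only [Finset.mem_inter] at ht
      exact (Finset.mem_compl.mp (h2 ht.1)) ht.2
    have hPE : (p.1 ∪ p.2) ∩ E = p.1 := by
      rw [Finset.union_inter_distrib_right, h2E, Finset.union_empty,
        Finset.inter_eq_left.mpr h1]
    have hPD : (p.1 ∪ p.2) \ E = p.2 := by
      rw [Finset.union_sdiff_distrib, Finset.sdiff_eq_empty_iff_subset.mpr h1,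
        Finset.empty_union]
      apply Finset.sdiff_eq_self_of_disjoint
      apply Finset.disjoint_left.mpr
      intro t ht2 htE
      exact (Finset.mem_compl.mp (h2 ht2)) htE
    rw [hPE, hPD]

lemma char_sum {n : ℕ} (k : ℕ) (E : Finset (Fin n)) :
    ∑ S ∈ (Finset.univ : Finset (Fin n)).powersetCard k, (-1 : ℤ) ^ (S ∩ E).card
      = Kraw k n E.card := by
  have hmaps : ∀ S ∈ (Finset.univ : Finset (Fin n)).powersetCard k,
      (S ∩ E).card ∈ Finset.range (k + 1) := by
    intro S hS
    rw [Finset.mem_range, Nat.lt_succ_iff]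
    have hSk : S.card = k := (Finset.mem_powersetCard.mp hS).2
    calc (S ∩ E).card ≤ S.card := Finset.card_le_card Finset.inter_subset_left
      _ = k := hSk
  rw [← Finset.sum_fiberwise_of_maps_to hmaps (fun S => (-1 : ℤ) ^ (S ∩ E).card)]
  unfold Kraw
  refine Finset.sum_congr rfl fun j hj => ?_
  have hj' : j ≤ k := Nat.lt_succ_iff.mp (Finset.mem_range.mp hj)
  calc ∑ S ∈ ((Finset.univ : Finset (Fin n)).powersetCard k).filter
          (fun S => (S ∩ E).card = j), (-1 : ℤ) ^ (S ∩ E).card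
      = ∑ S ∈ ((Finset.univ : Finset (Fin n)).powersetCard k).filter
          (fun S => (S ∩ E).card = j), (-1 : ℤ) ^ j := by
        refine Finset.sum_congr rfl fun S hS => ?_
        rw [(Finset.mem_filter.mp hS).2]
    _ = (-1 : ℤ) ^ j * E.card.choose j * (n - E.card).choose (k - j) := by
        rw [Finset.sum_const, fiber_card E k j hj', nsmul_eq_mul]
        push_cast
        ring

lemma sign_eq_prod {n : ℕ} (S : Finset (Fin n)) (u : Fin n → ZMod 2) :
    (-1 : ℤ) ^ (S ∩ supp u).card = ∏ t ∈ S, chi (u t) := by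
  have h : S ∩ supp u = S.filter (fun t => u t = 1) := by
    ext t
    simp [supp, Finset.mem_inter, Finset.mem_filter]
  rw [h]
  unfold chi
  rw [Finset.prod_ite (fun _ => (-1 : ℤ)) (fun _ => (1 : ℤ)), Finset.prod_const,
    Finset.prod_const, one_pow, mul_one]

lemma hd_eq {n : ℕ} (u v : Fin n → ZMod 2) :
    hammingDist u v = (supp (fun t => u t + v t)).card := by
  unfold supp
  show (Finset.univ.filter (fun t => u t ≠ v t)).card = _
  congr 1
  apply Finset.filter_congr
  intro t _
  constructor
  · intro h
    have : ∀ a b : ZMod 2, a ≠ b → a + b = 1 := by decide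
    exact this _ _ h
  · intro h
    have : ∀ a b : ZMod 2, a + b = 1 → a ≠ b := by decide
    exact this _ _ h

lemma kraw_pair {n : ℕ} (k : ℕ) (u v : Fin n → ZMod 2) :
    Kraw k n (hammingDist u v)
      = ∑ S ∈ (Finset.univ : Finset (Fin n)).powersetCard k,
          (∏ t ∈ S, chi (u t)) * (∏ t ∈ S, chi (v t)) := by
  rw [hd_eq, ← char_sum]
  refine Finset.sum_congr rfl fun S _ => ?_
  rw [sign_eq_prod, ← Finset.prod_mul_distrib]
  exact Finset.prod_congr rfl fun t _ => chi_add (u t) (v t)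

lemma double_sum {n : ℕ} (k : ℕ) (C : Finset (Fin n → ZMod 2)) :
    ∑ u ∈ C, ∑ v ∈ C, Kraw k n (hammingDist u v)
      = ∑ S ∈ (Finset.univ : Finset (Fin n)).powersetCard k,
          (∑ u ∈ C, ∏ t ∈ S, chi (u t)) ^ 2 := by
  simp_rw [kraw_pair]
  have h1 : ∀ u : Fin n → ZMod 2,
      ∑ v ∈ C, ∑ S ∈ (Finset.univ : Finset (Fin n)).powersetCard k,
          (∏ t ∈ S, chi (u t)) * (∏ t ∈ S, chi (v t))
        = ∑ S ∈ (Finset.univ : Finset (Fin n)).powersetCard k,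
            ∑ v ∈ C, (∏ t ∈ S, chi (u t)) * (∏ t ∈ S, chi (v t)) := fun u =>
    Finset.sum_comm
  rw [Finset.sum_congr rfl fun u _ => h1 u, Finset.sum_comm]
  refine Finset.sum_congr rfl fun S _ => ?_
  rw [sq, Finset.sum_mul_sum]



lemma kraw_zero (k n : ℕ) : Kraw k n 0 = n.choose k := by
  unfold Kraw
  rw [Finset.sum_eq_single 0]
  · simp
  · intro j hj hj0
    rw [Nat.choose_eq_zero_of_lt (Nat.pos_of_ne_zero hj0)]
    simp
  · simp

lemma sdist_zero {n : ℕ} (C : Finset (Fin n → ZMod 2)) (c : Fin n → ZMod 2)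
    (hc : c ∈ C) : Sdist C c 0 = {c} := by
  ext u
  simp only [Sdist, Finset.mem_filter, hammingDist_eq_zero, Finset.mem_singleton]
  constructor
  · exact fun h => h.2
  · rintro rfl; exact ⟨hc, rfl⟩

lemma fiber_dist {n : ℕ} (k : ℕ) (C : Finset (Fin n → ZMod 2))
    (c : Fin n → ZMod 2) :
    ∑ i ∈ Finset.range (n + 1), Kraw k n i * ((Sdist C c i).card : ℤ)
      = ∑ u ∈ C, Kraw k n (hammingDist u c) := by
  have hmaps : ∀ u ∈ C, hammingDist u c ∈ Finset.range (n + 1) := by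
    intro u _
    rw [Finset.mem_range, Nat.lt_succ_iff]
    calc hammingDist u c ≤ Fintype.card (Fin n) := hammingDist_le_card_fintype
      _ = n := Fintype.card_fin n
  rw [← Finset.sum_fiberwise_of_maps_to hmaps (fun u => Kraw k n (hammingDist u c))]
  refine Finset.sum_congr rfl fun i hi => ?_
  symm
  calc ∑ u ∈ C.filter (fun u => hammingDist u c = i), Kraw k n (hammingDist u c)
      = ∑ u ∈ C.filter (fun u => hammingDist u c = i), Kraw k n i := by
        refine Finset.sum_congr rfl fun u hu => ?_
        rw [(Finset.mem_filter.mp hu).2]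
    _ = Kraw k n i * ((Sdist C c i).card : ℤ) := by
        rw [Finset.sum_const, nsmul_eq_mul, Sdist, mul_comm]

end DelsarteAux

open DelsarteAux

/-- Delsarte inequalities for binary codes: For a nonempty binary
code `C ⊆ F^n` of size `M` with minimum distance at least `d`, and its distance
distribution `{A_i}`, for every `k = 0,…,n` one has
`∑_{i=1}^n P_k(n;i) A_i ≥ -C(n,k)`, and if `M` is odd, then
`∑_{i=1}^n P_k(n;i) A_i ≥ ((1-M)/M) C(n,k)`. -/
theorem delsarte_binary (n d : ℕ) (C : Finset (Fin n → ZMod 2)) (hC : C.Nonempty)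
    (hdist : ∀ u ∈ C, ∀ v ∈ C, u ≠ v → d ≤ hammingDist u v) :
    ∀ k : ℕ, k ≤ n →
      (-(n.choose k : ℚ) ≤ ∑ i ∈ Finset.Icc 1 n, (Kraw k n i : ℚ) * distDistr C i) ∧
      (Odd C.card →
        ((1 - (C.card : ℚ)) / (C.card : ℚ)) * (n.choose k : ℚ)
          ≤ ∑ i ∈ Finset.Icc 1 n, (Kraw k n i : ℚ) * distDistr C i) := by
  intro k hk
  classical
  have hM0 : 0 < C.card := Finset.card_pos.mpr hC
  have hMQ : (0 : ℚ) < (C.card : ℚ) := by exact_mod_cast hM0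
  set D : ℤ := ∑ u ∈ C, ∑ v ∈ C, Kraw k n (hammingDist u v) with hDdef
  clear_value D
  have hDsq : D = ∑ S ∈ (Finset.univ : Finset (Fin n)).powersetCard k,
      (∑ u ∈ C, ∏ t ∈ S, chi (u t)) ^ 2 := by rw [hDdef]; exact double_sum k C
  have hD0 : (0 : ℤ) ≤ D := by
    rw [hDsq]
    exact Finset.sum_nonneg fun S _ => sq_nonneg _
  -- the ℤ-identity over all distances
  have hZ : ∑ i ∈ Finset.range (n + 1),
      Kraw k n i * (∑ c ∈ C, ((Sdist C c i).card : ℤ)) = D := by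
    calc ∑ i ∈ Finset.range (n + 1), Kraw k n i * (∑ c ∈ C, ((Sdist C c i).card : ℤ))
        = ∑ i ∈ Finset.range (n + 1), ∑ c ∈ C, Kraw k n i * ((Sdist C c i).card : ℤ) := by
          simp_rw [Finset.mul_sum]
      _ = ∑ c ∈ C, ∑ i ∈ Finset.range (n + 1), Kraw k n i * ((Sdist C c i).card : ℤ) :=
          Finset.sum_comm
      _ = ∑ c ∈ C, ∑ u ∈ C, Kraw k n (hammingDist u c) :=
          Finset.sum_congr rfl fun c _ => fiber_dist k C c
      _ = D := by rw [hDdef, Finset.sum_comm]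
  have hins : Finset.range (n + 1) = insert 0 (Finset.Icc 1 n) := by
    ext i
    simp only [Finset.mem_range, Finset.mem_insert, Finset.mem_Icc]
    constructor
    · intro h
      rcases Nat.eq_zero_or_pos i with h0 | h0
      · exact Or.inl h0
      · exact Or.inr ⟨h0, Nat.lt_succ_iff.mp h⟩
    · rintro (rfl | ⟨_, h2⟩)
      · exact n.succ_pos
      · exact Nat.lt_succ_of_le h2
  have hzeroterm : Kraw k n 0 * (∑ c ∈ C, ((Sdist C c 0).card : ℤ))
      = (n.choose k : ℤ) * (C.card : ℤ) := by
    rw [kraw_zero]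
    congr 1
    calc ∑ c ∈ C, ((Sdist C c 0).card : ℤ) = ∑ c ∈ C, (1 : ℤ) := by
          refine Finset.sum_congr rfl fun c hc => ?_
          rw [sdist_zero C c hc, Finset.card_singleton, Nat.cast_one]
      _ = (C.card : ℤ) := by rw [Finset.sum_const, nsmul_eq_mul, mul_one]
  have hZsplit : ∑ i ∈ Finset.Icc 1 n, Kraw k n i * (∑ c ∈ C, ((Sdist C c i).card : ℤ))
      = D - (n.choose k : ℤ) * (C.card : ℤ) := by
    have h0 : (0 : ℕ) ∉ Finset.Icc 1 n := by simp
    rw [hins, Finset.sum_insert h0, hzeroterm] at hZ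
    exact eq_sub_of_add_eq' hZ
  have hQ : ∑ i ∈ Finset.Icc 1 n, (Kraw k n i : ℚ) * distDistr C i
      = ((D : ℚ) - (n.choose k : ℚ) * (C.card : ℚ)) / (C.card : ℚ) := by
    unfold distDistr
    calc ∑ i ∈ Finset.Icc 1 n, (Kraw k n i : ℚ)
          * ((∑ c ∈ C, ((Sdist C c i).card : ℚ)) / (C.card : ℚ))
        = (∑ i ∈ Finset.Icc 1 n, (Kraw k n i : ℚ)
            * (∑ c ∈ C, ((Sdist C c i).card : ℚ))) / (C.card : ℚ) := by
          rw [Finset.sum_div]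
          exact Finset.sum_congr rfl fun i _ => (mul_div_assoc _ _ _).symm
      _ = ((D : ℚ) - (n.choose k : ℚ) * (C.card : ℚ)) / (C.card : ℚ) := by
          congr 1
          exact_mod_cast congrArg (fun z : ℤ => (z : ℚ)) hZsplit
  constructor
  · rw [hQ]
    rw [le_div_iff₀ hMQ]
    have : (0 : ℚ) ≤ (D : ℚ) := by exact_mod_cast hD0
    nlinarith
  · intro hodd
    have hD1 : (n.choose k : ℤ) ≤ D := by
      rw [hDsq]
      have hcard : ((Finset.univ : Finset (Fin n)).powersetCard k).card = n.choose k := by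
        rw [Finset.card_powersetCard, Finset.card_univ, Fintype.card_fin]
      calc (n.choose k : ℤ)
          = ∑ _S ∈ (Finset.univ : Finset (Fin n)).powersetCard k, (1 : ℤ) := by
            rw [Finset.sum_const, hcard, nsmul_eq_mul, mul_one]
        _ ≤ ∑ S ∈ (Finset.univ : Finset (Fin n)).powersetCard k,
              (∑ u ∈ C, ∏ t ∈ S, chi (u t)) ^ 2 := by
            refine Finset.sum_le_sum fun S _ => ?_
            have hne : (∑ u ∈ C, ∏ t ∈ S, chi (u t)) ≠ 0 := by
              intro h0
              have hcast : ((∑ u ∈ C, ∏ t ∈ S, chi (u t) : ℤ) : ZMod 2) = (C.card : ZMod 2) := by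
                push_cast
                calc ∑ u ∈ C, ∏ t ∈ S, ((chi (u t) : ℤ) : ZMod 2)
                    = ∑ u ∈ C, ∏ t ∈ S, (1 : ZMod 2) := by
                      refine Finset.sum_congr rfl fun u _ => ?_
                      exact Finset.prod_congr rfl fun t _ => chi_cast (u t)
                  _ = (C.card : ZMod 2) := by simp
              rw [h0] at hcast
              have hodd2 : (C.card : ZMod 2) = 1 := by
                have h2 : C.card % 2 = 1 := Nat.odd_iff.mp hodd
                rw [← ZMod.natCast_mod, h2, Nat.cast_one]
              rw [hodd2] at hcast
              exact one_ne_zero hcast.symm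
            have habs := Int.one_le_abs hne
            calc (1 : ℤ) = 1 ^ 2 := by ring
              _ ≤ |∑ u ∈ C, ∏ t ∈ S, chi (u t)| ^ 2 := by
                  exact pow_le_pow_left₀ (by norm_num) habs 2
              _ = (∑ u ∈ C, ∏ t ∈ S, chi (u t)) ^ 2 := sq_abs _
    rw [hQ]
    rw [div_mul_eq_mul_div, div_le_div_iff₀ hMQ hMQ]
    have : (n.choose k : ℚ) ≤ (D : ℚ) := by exact_mod_cast hD1
    nlinarith [hMQ, this]
end
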